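/- arXiv:1212.3849 — 3 statements merged into one kernel-verified Lean document; each statement's English description precedes it below -/
import Mathlib

section
/- Let P : F_p^n → ℝ/ℤ be a non-classical polynomial of degree d and rank ≥ r, with r > p + 1. Let A be a hyperplane (affine subspace of codimension 1) in F_p^n and P' the restriction of P to A. Then P' is a polynomial of degree d and rank ≥ r − p, unless d = 1 and P is constant on A. -/
open scoped BigOperators

noncomputable section

/-- The circle group `𝕋 = ℝ/ℤ`. -/
abbrev 𝕋 : Type := AddCircle (1 : ℝ)

/-- The character `e(x) = e^{2πix}` on `𝕋`, valued in `ℂ`. -/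
def ee (x : 𝕋) : ℂ := (AddCircle.toCircle x : ℂ)

/-- The average `E_{x ∈ α}[f(x)]` of a complex-valued function on a finite type. -/
def cavg {α : Type*} [Fintype α] (f : α → ℂ) : ℂ := (∑ x, f x) / (Fintype.card α : ℂ)

/-- The average of a real-valued function on a finite type. -/
def ravg {α : Type*} [Fintype α] (f : α → ℝ) : ℝ := (∑ x, f x) / (Fintype.card α : ℝ)

/-- Multiplicative derivative `Δ_h f (x) = f(x+h) conj (f x)`. -/
def mDeriv {G : Type*} [Add G] (h : G) (f : G → ℂ) : G → ℂ :=
  fun x => f (x + h) * (starRingEnd ℂ) (f x)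

/-- `E_{h_1,…,h_d,x}[(Δ_{h_1} ⋯ Δ_{h_d} f)(x)]`. -/
def gowersAvg {G : Type*} [AddCommGroup G] [Fintype G] : ℕ → (G → ℂ) → ℂ
  | 0, f => cavg f
  | d + 1, f => cavg fun h => gowersAvg d (mDeriv h f)

/-- The Gowers norm `‖f‖_{U^d} = |E_{h_1,…,h_d,x}[(Δ_{h_1} ⋯ Δ_{h_d} f)(x)]|^{1/2^d}`. -/
def gowersNorm {G : Type*} [AddCommGroup G] [Fintype G] (d : ℕ) (f : G → ℂ) : ℝ :=
  (‖gowersAvg d f‖) ^ ((1 : ℝ) / 2 ^ d)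

/-- Additive derivative `D_h P (x) = P(x+h) - P(x)`. -/
def aDeriv {G M : Type*} [Add G] [Sub M] (h : G) (P : G → M) : G → M :=
  fun x => P (x + h) - P x

/-- Iterated additive derivative `D_{h_1} ⋯ D_{h_k} P`. -/
def iterADeriv {G M : Type*} [AddCommGroup G] [AddCommGroup M] :
    {k : ℕ} → (Fin k → G) → (G → M) → (G → M)
  | 0, _, P => P
  | _ + 1, h, P => aDeriv (h 0) (iterADeriv (Fin.tail h) P)

/-- `P` is a (non-classical) polynomial of degree ≤ `d`:
all `(d+1)`-fold additive derivatives vanish identically. -/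
def IsPolyDeg {G M : Type*} [AddCommGroup G] [AddCommGroup M] (d : ℕ) (P : G → M) : Prop :=
  ∀ (h : Fin (d + 1) → G) (x : G), iterADeriv h P x = 0

/-- `P` has degree exactly `d`. -/
def ExactDeg {G M : Type*} [AddCommGroup G] [AddCommGroup M] (d : ℕ) (P : G → M) : Prop :=
  IsPolyDeg d P ∧ ∀ d' < d, ¬ IsPolyDeg d' P

/-- The degree of a polynomial: the least `d` with `IsPolyDeg d P`. -/
def polyDeg {G M : Type*} [AddCommGroup G] [AddCommGroup M] (P : G → M) : ℕ :=
  sInf {d | IsPolyDeg d P}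

/-- `P` has `d`-rank at most `r`: `P = Γ(Q_1,…,Q_r)` with the `Q_i` of degree ≤ `d-1`. -/
def HasRankLE {G : Type*} [AddCommGroup G] (d : ℕ) (P : G → 𝕋) (r : ℕ) : Prop :=
  ∃ (Q : Fin r → G → 𝕋) (Γ : (Fin r → 𝕋) → 𝕋),
    (∀ i, IsPolyDeg (d - 1) (Q i)) ∧ ∀ x, P x = Γ fun i => Q i x

/-- The `d`-rank of `P`, in `ℕ∞` (`⊤` if no finite decomposition exists;
for `d = 1` this is `⊤` exactly when `P` is non-constant). -/
def rankd {G : Type*} [AddCommGroup G] (d : ℕ) (P : G → 𝕋) : ℕ∞ :=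
  sInf {r : ℕ∞ | ∃ m : ℕ, r = m ∧ HasRankLE d P m}

/-- `P` has depth exactly `k` (shift zero): values in `U_{k+1} = (1/p^{k+1})ℤ/ℤ` but not all
in `U_k`. -/
def ExactDepth {G : Type*} (p k : ℕ) (P : G → 𝕋) : Prop :=
  (∀ x, (p ^ (k + 1)) • P x = 0) ∧ ¬ (∀ x, (p ^ k) • P x = 0)

/-- Application of a linear form `L = (w_t)_t` to a tuple of points of `F_p^n`:
`(x_t)_t ↦ ∑_t w_t x_t`. -/
def formApply {p : ℕ} {ι : Type*} [Fintype ι] {n : ℕ} (L : ι → ZMod p)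
    (x : ι → Fin n → ZMod p) : Fin n → ZMod p := ∑ t, L t • x t

/-- The `(d,k)`-dependency set of a system of forms `L`: the tuples
`(λ_j) ∈ [0, p^{k+1}-1]^m` with `∑_j λ_j P(L_j(x)) ≡ 0` for every non-classical polynomial `P`
of degree `d` and depth `k` (over every `F_p^n`). -/
def DepSet (p k d : ℕ) {ι μ : Type*} [Fintype ι] [Fintype μ]
    (L : μ → ι → ZMod p) : Set (μ → ℕ) :=
  {lam | (∀ j, lam j < p ^ (k + 1)) ∧
    ∀ (n : ℕ) (P : (Fin n → ZMod p) → 𝕋), ExactDeg d P → ExactDepth p k P →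
      ∀ x : ι → Fin n → ZMod p, (∑ j, lam j • P (formApply (L j) x)) = 0}

/-- `b_1,…,b_m ∈ 𝕋^κ` are consistent with the forms `L` with respect to degree data `dd`
and depth data `kk`. -/
def ConsistentWith (p : ℕ) {ι κ : Type*} [Fintype ι] [Fintype κ] {m : ℕ}
    (L : Fin m → ι → ZMod p) (dd kk : κ → ℕ) (b : Fin m → κ → 𝕋) : Prop :=
  ∀ i : κ, (∀ j, (p ^ (kk i + 1)) • b j i = 0) ∧
    ∀ lam ∈ DepSet p (kk i) (dd i) L, (∑ j, lam j • b j i) = 0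

/-- The polynomial factor defined by `P_1,…,P_C` with depths `k_1,…,k_C` has rank greater
than `r`: every integer combination `∑ λ_i P_i`, with the `λ_i` not all divisible by the
respective `p^{k_i+1}`, has `D`-rank > `r` where `D = max_i deg(λ_i P_i)`. -/
def FactorRankGT (p : ℕ) {G : Type*} [AddCommGroup G] {C : ℕ}
    (P : Fin C → G → 𝕋) (k : Fin C → ℕ) (r : ℕ) : Prop :=
  ∀ lam : Fin C → ℤ, (∃ i, ¬ ((p : ℤ) ^ (k i + 1) ∣ lam i)) →
    (r : ℕ∞) < rankd (Finset.univ.sup fun i => polyDeg fun x => lam i • P i x)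
      (fun x => ∑ i, lam i • P i x)

/-- Cauchy–Schwarz complexity ≤ `d`: for each `i`, the remaining forms can be partitioned into
`d+1` classes, with `L_i` outside the linear span of each class. -/
def CSComplexityLE (p : ℕ) {m : ℕ} {ι : Type*} [Fintype ι] (d : ℕ)
    (L : Fin m → ι → ZMod p) : Prop :=
  ∀ i, ∃ c : Fin m → Fin (d + 1), ∀ t,
    L i ∉ Submodule.span (ZMod p) {v | ∃ j, j ≠ i ∧ c j = t ∧ v = L j}


-- AUX SECTION (to be inserted into proof.lean before the theorem)
section AuxPoly

variable {G G' M : Type*} [AddCommGroup G] [AddCommGroup G'] [AddCommGroup M]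

lemma aDeriv_comm (a b : G) (P : G → M) : aDeriv a (aDeriv b P) = aDeriv b (aDeriv a P) := by
  funext x
  simp only [aDeriv]
  rw [add_right_comm]
  abel

lemma iterADeriv_succ {k : ℕ} (h : Fin (k+1) → G) (P : G → M) :
    iterADeriv h P = aDeriv (h 0) (iterADeriv (Fin.tail h) P) := rfl

lemma iterADeriv_aDeriv {k : ℕ} (h : Fin k → G) (v : G) (P : G → M) :
    iterADeriv h (aDeriv v P) = aDeriv v (iterADeriv h P) := by
  induction k with
  | zero => rfl
  | succ k ih =>
    rw [iterADeriv_succ, iterADeriv_succ h P, ih, aDeriv_comm]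

lemma IsPolyDeg.succ {d : ℕ} {P : G → M} (hP : IsPolyDeg d P) : IsPolyDeg (d+1) P := by
  intro h x
  rw [iterADeriv_succ]
  have h0 : iterADeriv (Fin.tail h) P = fun _ => (0 : M) := funext fun y => hP _ y
  simp [h0, aDeriv]

lemma IsPolyDeg.mono {d d' : ℕ} (hd : d ≤ d') {P : G → M} (hP : IsPolyDeg d P) :
    IsPolyDeg d' P := by
  induction d' with
  | zero => exact Nat.le_zero.mp hd ▸ hP
  | succ k ih =>
    rcases Nat.lt_or_ge d (k+1) with h | h
    · exact (ih (Nat.lt_succ_iff.mp h)).succ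
    · exact (Nat.le_antisymm hd h) ▸ hP

lemma IsPolyDeg.aDeriv_poly {d : ℕ} {P : G → M} (hP : IsPolyDeg (d+1) P) (v : G) :
    IsPolyDeg d (aDeriv v P) := by
  intro h x
  rw [iterADeriv_aDeriv]
  have h0 : iterADeriv (Fin.cons v h) P x = 0 := hP _ x
  rw [iterADeriv_succ, Fin.cons_zero, Fin.tail_cons] at h0
  exact h0

lemma iterADeriv_comp {k : ℕ} (h : Fin k → G') (P : G → M) (τ : G' → G) (T : G' → G)
    (Hτ : ∀ x h', τ (x + h') = τ x + T h') :
    iterADeriv h (fun x => P (τ x)) = fun x => iterADeriv (fun i => T (h i)) P (τ x) := by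
  induction k with
  | zero => rfl
  | succ k ih =>
    rw [iterADeriv_succ, ih (Fin.tail h)]
    funext x
    rw [iterADeriv_succ (fun i => T (h i)) P]
    show iterADeriv (fun i => T (Fin.tail h i)) P (τ (x + h 0))
        - iterADeriv (fun i => T (Fin.tail h i)) P (τ x)
      = aDeriv (T (h 0)) (iterADeriv (Fin.tail fun i => T (h i)) P) (τ x)
    rw [Hτ]
    rfl

lemma IsPolyDeg.comp {d : ℕ} {P : G → M} (hP : IsPolyDeg d P) (τ : G' → G) (T : G' → G)
    (Hτ : ∀ x h', τ (x + h') = τ x + T h') :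
    IsPolyDeg d (fun x => P (τ x)) := by
  intro h x
  rw [iterADeriv_comp h P τ T Hτ]
  exact hP _ _

lemma iterADeriv_add {k : ℕ} (h : Fin k → G) (P Q : G → M) :
    iterADeriv h (fun x => P x + Q x) = fun x => iterADeriv h P x + iterADeriv h Q x := by
  induction k with
  | zero => rfl
  | succ k ih =>
    rw [iterADeriv_succ, ih]
    funext x
    rw [iterADeriv_succ h P, iterADeriv_succ h Q]
    show (iterADeriv (Fin.tail h) P (x + h 0) + iterADeriv (Fin.tail h) Q (x + h 0))
        - (iterADeriv (Fin.tail h) P x + iterADeriv (Fin.tail h) Q x) = _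
    show _ = (iterADeriv (Fin.tail h) P (x + h 0) - iterADeriv (Fin.tail h) P x)
        + (iterADeriv (Fin.tail h) Q (x + h 0) - iterADeriv (Fin.tail h) Q x)
    abel

lemma IsPolyDeg.const (d : ℕ) (c : M) : IsPolyDeg d (fun _ : G => c) := by
  have h0 : IsPolyDeg 0 (fun _ : G => c) := by
    intro h x
    show c - c = 0
    simp
  exact h0.mono (Nat.zero_le d)

lemma IsPolyDeg.sum {d : ℕ} {ι : Type*} (s : Finset ι) (f : ι → G → M)
    (hf : ∀ i ∈ s, IsPolyDeg d (f i)) :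
    IsPolyDeg d (fun x => ∑ i ∈ s, f i x) := by
  classical
  induction s using Finset.induction_on with
  | empty => simpa using IsPolyDeg.const (G := G) d (0 : M)
  | @insert a s' hx ih =>
    have hfun : (fun x => ∑ i ∈ insert a s', f i x)
        = fun x => f a x + ∑ i ∈ s', f i x := by
      funext x; rw [Finset.sum_insert hx]
    rw [hfun]
    intro h x
    rw [iterADeriv_add]
    have h1 := hf a (Finset.mem_insert_self a s') h x
    have h2 := (ih (fun i hi => hf i (Finset.mem_insert_of_mem hi))) h x
    simp only [h1, h2, add_zero]

lemma IsPolyDeg.constant {P : G → M} (h : IsPolyDeg 0 P) : ∀ x y, P x = P y := by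
  intro x y
  have h2 : P (y + (x - y)) - P y = 0 := h (fun _ => x - y) y
  rw [show y + (x - y) = x by abel] at h2
  exact sub_eq_zero.mp h2

lemma IsPolyDeg.of_add_eq {f : G → M} (κ : G → M)
    (Hf : ∀ x h', f (x + h') = f x + κ h') : IsPolyDeg 1 f := by
  intro h x
  show (f (x + h 0 + h 1) - f (x + h 0)) - (f (x + h 1) - f x) = 0
  rw [Hf (x + h 0) (h 1), Hf x (h 0), Hf x (h 1)]
  abel

end AuxPoly

section Iota
variable (p : ℕ) [Fact p.Prime]

noncomputable def iotaZ : ℤ →+ 𝕋 := zmultiplesHom 𝕋 (((p : ℝ)⁻¹ : ℝ) : 𝕋)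

lemma iotaZ_p : iotaZ p (p : ℤ) = 0 := by
  have hp : (p : ℝ) ≠ 0 := Nat.cast_ne_zero.mpr (Fact.out : p.Prime).ne_zero
  show (p : ℤ) • (((p : ℝ)⁻¹ : ℝ) : 𝕋) = 0
  rw [← AddCircle.coe_zsmul]
  have hps : (p : ℤ) • ((p : ℝ)⁻¹) = (1 : ℝ) := by
    rw [zsmul_eq_mul]
    push_cast
    field_simp
  rw [hps]
  exact AddCircle.coe_period (1 : ℝ)

noncomputable def iota : ZMod p →+ 𝕋 := ZMod.lift p ⟨iotaZ p, iotaZ_p p⟩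

lemma iota_apply (a : ZMod p) : iota p a = (((a.val : ℝ) * (p : ℝ)⁻¹ : ℝ) : 𝕋) := by
  haveI : NeZero p := ⟨(Fact.out : p.Prime).ne_zero⟩
  have h1 : a = (((a.val : ℤ) : ℤ) : ZMod p) := by
    push_cast
    rw [ZMod.natCast_rightInverse a]
  conv_lhs => rw [h1]
  rw [iota, ZMod.lift_coe]
  show ((a.val : ℤ)) • (((p : ℝ)⁻¹ : ℝ) : 𝕋) = _
  rw [← AddCircle.coe_zsmul]
  congr 1
  rw [zsmul_eq_mul]
  push_cast
  ring

def finOfZMod [NeZero p] (t : ZMod p) : Fin p := ⟨t.val, ZMod.val_lt t⟩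

lemma iota_injective : Function.Injective (iota p) := by
  haveI : NeZero p := ⟨(Fact.out : p.Prime).ne_zero⟩
  have hp : (0 : ℝ) < p := Nat.cast_pos.mpr (Fact.out : p.Prime).pos
  intro a b hab
  rw [← sub_eq_zero, ← map_sub] at hab
  set c := a - b with hc
  have h0 : c = 0 := by
    rw [iota_apply] at hab
    rw [AddCircle.coe_eq_zero_iff] at hab
    obtain ⟨k, hk⟩ := hab
    have hkr : (k : ℝ) = (c.val : ℝ) * (p : ℝ)⁻¹ := by
      rw [← hk]; simp
    have h1 : (0 : ℝ) ≤ (k : ℝ) := by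
      rw [hkr]; positivity
    have h2 : (k : ℝ) < 1 := by
      rw [hkr]
      rw [mul_inv_lt_iff₀ hp, one_mul]
      exact_mod_cast ZMod.val_lt c
    have hk0 : k = 0 := by
      have h1' : (0 : ℤ) ≤ k := by exact_mod_cast h1
      have h2' : k < 1 := by exact_mod_cast h2
      omega
    rw [hk0] at hkr
    simp only [Int.cast_zero] at hkr
    have hv0 : (c.val : ℝ) = 0 := by
      have hne : ((p : ℝ))⁻¹ ≠ 0 := by positivity
      rcases mul_eq_zero.mp hkr.symm with h | h
      · exact h
      · exact absurd h hne
    have : c.val = 0 := by exact_mod_cast hv0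
    exact (ZMod.val_eq_zero c).mp this
  rw [← sub_eq_zero]
  exact h0

end Iota

section Setup
variable (p n : ℕ) [Fact p.Prime]

lemma affine_apply (φ : (Fin n → ZMod p) →ᵃ[ZMod p] (Fin (n+1) → ZMod p))
    (x : Fin n → ZMod p) : φ x = φ.linear x + φ 0 := by
  have h := φ.linearMap_vsub x 0
  simp only [vsub_eq_sub, sub_zero] at h
  rw [h]
  abel

lemma exists_setup (φ : (Fin n → ZMod p) →ᵃ[ZMod p] (Fin (n+1) → ZMod p))
    (hφ : Function.Injective φ) :
    ∃ (ℓ : (Fin (n+1) → ZMod p) →ₗ[ZMod p] ZMod p) (v : Fin (n+1) → ZMod p)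
      (g : (Fin (n+1) → ZMod p) →ₗ[ZMod p] (Fin n → ZMod p)),
      ℓ v = 1 ∧ LinearMap.ker ℓ = LinearMap.range φ.linear ∧
        ∀ x, g (φ.linear x) = x := by
  classical
  have hLinj : Function.Injective φ.linear := by
    intro x y hxy
    apply hφ
    rw [affine_apply p n φ x, affine_apply p n φ y, hxy]
  set L := φ.linear with hL
  set rg := LinearMap.range L with hrg
  have hrk : Module.finrank (ZMod p) rg = n := by
    rw [hrg, LinearMap.finrank_range_of_inj hLinj]
    simp [Module.finrank_pi]
  have hq : Module.finrank (ZMod p) ((Fin (n+1) → ZMod p) ⧸ rg) = 1 := by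
    have h1 := Submodule.finrank_quotient_add_finrank rg
    have h2 : Module.finrank (ZMod p) (Fin (n+1) → ZMod p) = n + 1 := by
      simp [Module.finrank_pi]
    omega
  have he : Nonempty (((Fin (n+1) → ZMod p) ⧸ rg) ≃ₗ[ZMod p] ZMod p) := by
    apply FiniteDimensional.nonempty_linearEquiv_of_finrank_eq
    rw [hq, Module.finrank_self]
  obtain ⟨e⟩ := he
  set ℓ : (Fin (n+1) → ZMod p) →ₗ[ZMod p] ZMod p := e.toLinearMap ∘ₗ rg.mkQ with hℓ
  have hker : LinearMap.ker ℓ = rg := by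
    ext y
    simp only [hℓ, LinearMap.mem_ker, LinearMap.comp_apply, LinearEquiv.coe_coe]
    rw [LinearEquiv.map_eq_zero_iff]
    rw [Submodule.mkQ_apply, Submodule.Quotient.mk_eq_zero]
  have hsurj : Function.Surjective ℓ := by
    simp only [hℓ, LinearMap.coe_comp, LinearEquiv.coe_coe]
    exact e.surjective.comp rg.mkQ_surjective
  obtain ⟨v, hv⟩ := hsurj 1
  obtain ⟨g, hg⟩ := L.exists_leftInverse_of_injective (LinearMap.ker_eq_bot.mpr hLinj)
  refine ⟨ℓ, v, g, hv, hker, fun x => ?_⟩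
  have hgx := LinearMap.congr_fun hg x
  simpa using hgx

end Setup

section Core

lemma core_hasRank {p n d m : ℕ} [Fact p.Prime] (hd : 2 ≤ d)
    (P : (Fin (n+1) → ZMod p) → 𝕋) (hP : IsPolyDeg d P)
    (φ : (Fin n → ZMod p) →ᵃ[ZMod p] (Fin (n+1) → ZMod p)) (hφ : Function.Injective φ)
    (Q : Fin m → (Fin n → ZMod p) → 𝕋) (hQ : ∀ i, IsPolyDeg (d-1) (Q i))
    (Γ : (Fin m → 𝕋) → 𝕋) (hΓ : ∀ x, P (φ x) = Γ fun i => Q i x) :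
    HasRankLE d P (m + p) := by
  classical
  haveI : NeZero p := ⟨(Fact.out : p.Prime).ne_zero⟩
  obtain ⟨ℓ, v, g, hv, hker, hg⟩ := exists_setup p n φ hφ
  set c := ℓ (φ 0) with hc
  set ρ : (Fin (n+1) → ZMod p) → (Fin (n+1) → ZMod p) := fun y => y - (ℓ y - c) • v with hρ
  have hρadd : ∀ y h, ρ (y + h) = ρ y + (h - ℓ h • v) := by
    intro y h
    simp only [hρ, map_add]
    rw [show ℓ y + ℓ h - c = (ℓ y - c) + ℓ h by ring, add_smul]
    abel
  set σ : (Fin (n+1) → ZMod p) → (Fin n → ZMod p) := fun y => g (ρ y - φ 0) with hσ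
  have hσadd : ∀ y h, σ (y + h) = σ y + g (h - ℓ h • v) := by
    intro y h
    simp only [hσ]
    rw [hρadd, show ρ y + (h - ℓ h • v) - φ 0 = (ρ y - φ 0) + (h - ℓ h • v) by abel, map_add]
  have hℓρ : ∀ y, ℓ (ρ y) = c := by
    intro y
    simp only [hρ, map_sub, map_smul, smul_eq_mul, hv, mul_one]
    ring
  have hφσ : ∀ y, φ (σ y) = ρ y := by
    intro y
    have hmem : ρ y - φ 0 ∈ LinearMap.range φ.linear := by
      rw [← hker, LinearMap.mem_ker, map_sub, hℓρ y, ← hc, sub_self]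
    obtain ⟨x, hx⟩ := hmem
    have hσx : σ y = x := by
      show g (ρ y - φ 0) = x
      rw [← hx, hg]
    rw [hσx, affine_apply p n φ x, hx]
    abel
  set S : ℕ → (Fin (n+1) → ZMod p) → 𝕋 :=
    fun t y => ∑ i ∈ Finset.range t, aDeriv v P (ρ y + i • v) with hS
  have hStele : ∀ t y, S t y = P (ρ y + t • v) - P (ρ y) := by
    intro t y
    induction t with
    | zero => simp [hS]
    | succ k ih =>
      have hexp : S (k+1) y = S k y + aDeriv v P (ρ y + k • v) := by
        simp only [hS]
        rw [Finset.sum_range_succ]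
      have had : aDeriv v P (ρ y + k • v) = P (ρ y + k • v + v) - P (ρ y + k • v) := rfl
      have hsm : ρ y + (k + 1) • v = ρ y + k • v + v := by
        rw [succ_nsmul, ← add_assoc]
      rw [hexp, ih, had, hsm]
      abel
  have hmain : ∀ y, P y = Γ (fun i => Q i (σ y)) + S (ℓ y - c).val y := by
    intro y
    have h1 : ρ y + ((ℓ y - c).val : ℕ) • v = y := by
      have h2 : ((ℓ y - c).val : ℕ) • v = (ℓ y - c) • v := by
        rw [← Nat.cast_smul_eq_nsmul (ZMod p), ZMod.natCast_rightInverse]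
      rw [h2]
      exact sub_add_cancel y ((ℓ y - c) • v)
    rw [hStele, h1, ← hΓ (σ y), hφσ]
    abel
  set ℓT : (Fin (n+1) → ZMod p) → 𝕋 := fun y => iota p (ℓ y - c) with hℓT
  have hℓTadd : ∀ y h, ℓT (y + h) = ℓT y + iota p (ℓ h) := by
    intro y h
    simp only [hℓT, map_add]
    rw [show ℓ y + ℓ h - c = (ℓ y - c) + ℓ h by ring, map_add]
  set R : Fin p → (Fin (n+1) → ZMod p) → 𝕋 := fun j => if j = 0 then ℓT else S (j : ℕ) with hR
  set A : Fin m → (Fin (n+1) → ZMod p) → 𝕋 := fun i y => Q i (σ y) with hA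
  refine ⟨Fin.append A R,
    fun q => Γ (fun i => q (Fin.castAdd p i)) +
      (fun t : ZMod p => if t = 0 then 0 else q (Fin.natAdd m (finOfZMod p t)))
        (Function.invFun (iota p) (q (Fin.natAdd m 0))), ?_, ?_⟩
  · intro i
    refine Fin.addCases (motive := fun i => IsPolyDeg (d-1) (Fin.append A R i)) ?_ ?_ i
    · intro i
      rw [Fin.append_left]
      exact (hQ i).comp σ (fun h => g (h - ℓ h • v)) hσadd
    · intro j
      rw [Fin.append_right]
      simp only [hR]
      by_cases hj : j = 0
      · rw [if_pos hj]
        have h1 : IsPolyDeg 1 ℓT := IsPolyDeg.of_add_eq (fun h => iota p (ℓ h)) hℓTadd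
        exact h1.mono (by omega)
      · rw [if_neg hj]
        apply IsPolyDeg.sum
        intro i _
        have hdP : IsPolyDeg ((d-1)+1) P := by
          have hdd : d - 1 + 1 = d := by omega
          rw [hdd]
          exact hP
        have hder : IsPolyDeg (d-1) (aDeriv v P) := hdP.aDeriv_poly v
        exact hder.comp (fun y => ρ y + i • v) (fun h => h - ℓ h • v)
          (fun y h => by
            show ρ (y + h) + i • v = ρ y + i • v + (h - ℓ h • v)
            rw [hρadd]
            abel)
  · intro y
    have hR0 : R 0 = ℓT := by simp [hR]
    show P y = Γ (fun i => Fin.append A R (Fin.castAdd p i) y) +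
      (fun t : ZMod p => if t = 0 then 0
          else Fin.append A R (Fin.natAdd m (finOfZMod p t)) y)
        (Function.invFun (iota p) (Fin.append A R (Fin.natAdd m 0) y))
    simp only [Fin.append_left, Fin.append_right, hA, hR0, hℓT]
    rw [Function.leftInverse_invFun (iota_injective p) (ℓ y - c)]
    by_cases ht : ℓ y - c = 0
    · rw [if_pos ht]
      have hv0 : (ℓ y - c).val = 0 := by rw [ht, ZMod.val_zero]
      have hm := hmain y
      rw [hv0] at hm
      have hS0 : S 0 y = 0 := by simp [hS]
      rw [hS0] at hm
      simpa using hm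
    · rw [if_neg ht]
      have hne : finOfZMod p (ℓ y - c) ≠ 0 := by
        intro hcon
        apply ht
        rw [← ZMod.val_eq_zero]
        have hval := congrArg Fin.val hcon
        simpa [finOfZMod] using hval
      have hRj : R (finOfZMod p (ℓ y - c)) = S (ℓ y - c).val := by
        simp only [hR, if_neg hne]
        rfl
      rw [hRj]
      exact hmain y

end Core


/-- If `P` has degree `d` and rank ≥ `r > p+1`, and `A` is a hyperplane
(here parametrized by an injective affine map `φ : F_p^n → F_p^{n+1}`), then the restriction
`P' = P ∘ φ` has degree `d` and rank ≥ `r - p`, unless `d = 1` and `P` is constant on `A`. -/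
theorem rank_restrict_hyperplane (p : ℕ) [Fact p.Prime] (n d r : ℕ) (hr : p + 1 < r)
    (P : (Fin (n + 1) → ZMod p) → 𝕋) (hdeg : ExactDeg d P)
    (hrank : (r : ℕ∞) ≤ rankd d P)
    (φ : (Fin n → ZMod p) →ᵃ[ZMod p] (Fin (n + 1) → ZMod p))
    (hφ : Function.Injective φ) :
    (d = 1 ∧ ∀ x y, P (φ x) = P (φ y)) ∨
      (ExactDeg d (fun x => P (φ x)) ∧ ((r - p : ℕ) : ℕ∞) ≤ rankd d (fun x => P (φ x))) := by
  classical
  have hPd : IsPolyDeg d P := hdeg.1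
  have hcomp : ∀ x h, φ (x + h) = φ x + φ.linear h := by
    intro x h
    rw [affine_apply p n φ (x + h), affine_apply p n φ x, map_add]
    abel
  -- d = 0 is impossible
  rcases Nat.eq_zero_or_pos d with hd0 | hdpos
  · exfalso
    subst hd0
    have hconst : ∀ x, P x = P 0 := fun x => (IsPolyDeg.constant hPd x 0)
    have hle : HasRankLE 0 P 0 :=
      ⟨fun i => i.elim0, fun _ => P 0, fun i => i.elim0, fun x => hconst x⟩
    have h1 : rankd 0 P ≤ ((0 : ℕ) : ℕ∞) := sInf_le ⟨0, rfl, hle⟩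
    have h2 : r ≤ 0 := Nat.cast_le.mp (le_trans hrank h1)
    omega
  rcases Nat.lt_or_ge d 2 with hd1 | hd2
  · -- d = 1
    have hd1' : d = 1 := by omega
    subst hd1'
    by_cases hco : ∀ x y, P (φ x) = P (φ y)
    · exact Or.inl ⟨rfl, hco⟩
    · right
      refine ⟨⟨hPd.comp (fun x => φ x) (fun h => φ.linear h) hcomp, ?_⟩, ?_⟩
      · intro d' hd' hP0
        have hd'0 : d' = 0 := by omega
        subst hd'0
        exact hco fun x y => hP0.constant x y
      · apply le_sInf
        rintro b ⟨m, rfl, Qm, Γm, hQm, hΓm⟩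
        exfalso
        apply hco
        intro x y
        rw [show P (φ x) = (fun x => P (φ x)) x from rfl, hΓm x,
          show P (φ y) = (fun x => P (φ x)) y from rfl, hΓm y]
        congr 1
        funext i
        exact (hQm i).constant x y
  · -- d ≥ 2
    right
    constructor
    · refine ⟨hPd.comp (fun x => φ x) (fun h => φ.linear h) hcomp, ?_⟩
      intro d' hd' hP0
      have h1 : IsPolyDeg (d - 1) (fun x => P (φ x)) := hP0.mono (by omega)
      have hcore := core_hasRank hd2 P hPd φ hφ (fun _ : Fin 1 => fun x => P (φ x))
        (fun _ => h1) (fun q => q 0) (fun x => rfl)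
      have h2 : rankd d P ≤ ((1 + p : ℕ) : ℕ∞) := sInf_le ⟨1 + p, rfl, hcore⟩
      have h3 : r ≤ 1 + p := Nat.cast_le.mp (le_trans hrank h2)
      omega
    · apply le_sInf
      rintro b ⟨m, rfl, Qm, Γm, hQm, hΓm⟩
      have hcore := core_hasRank hd2 P hPd φ hφ Qm hQm Γm hΓm
      have h2 : rankd d P ≤ ((m + p : ℕ) : ℕ∞) := sInf_le ⟨m + p, rfl, hcore⟩
      have h3 : r ≤ m + p := Nat.cast_le.mp (le_trans hrank h2)
      exact Nat.cast_le.mpr (by omega)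

end
end

section
/- (Counting lemma.) Let f_1,...,f_m : F_p^n → [−1,1], and let L = {L_1,...,L_m} be a system of m linear forms in ℓ variables of Cauchy–Schwarz complexity d. Then |E_{x_1,...,x_ℓ ∈ F_p^n}[∏_{i=1}^m f_i(L_i(x_1,...,x_ℓ))]| ≤ min_{i ∈ [m]} ‖f_i‖_{U^{d+1}}. -/
open scoped BigOperators

noncomputable section

namespace CLAux
open Finset

variable {α β : Type*} [Fintype α] [Fintype β]

lemma ravg_congr {F G : α → ℝ} (h : ∀ a, F a = G a) : ravg F = ravg G := by
  rw [funext h]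

lemma ravg_equiv (e : α ≃ β) (F : β → ℝ) : ravg (fun a => F (e a)) = ravg F := by
  unfold ravg
  rw [Equiv.sum_comp e F, Fintype.card_congr e]

lemma ravg_prod (F : α × β → ℝ) : ravg F = ravg (fun a => ravg fun b => F (a, b)) := by
  unfold ravg
  rw [Fintype.sum_prod_type, Fintype.card_prod]
  push_cast
  simp only [← Finset.sum_div]
  rw [div_div, mul_comm (Fintype.card β : ℝ)]

lemma ravg_const [Nonempty α] (c : ℝ) : ravg (fun _ : α => c) = c := by
  have : (Fintype.card α : ℝ) ≠ 0 := by positivity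
  unfold ravg
  rw [Finset.sum_const, Finset.card_univ, nsmul_eq_mul]
  field_simp

lemma ravg_mul_const (F : α → ℝ) (c : ℝ) : ravg (fun a => F a * c) = ravg F * c := by
  unfold ravg
  rw [← Finset.sum_mul, div_mul_eq_mul_div]

lemma ravg_const_mul (F : α → ℝ) (c : ℝ) : ravg (fun a => c * F a) = c * ravg F := by
  unfold ravg
  rw [← Finset.mul_sum, mul_div_assoc]

lemma ravg_nonneg {F : α → ℝ} (h : ∀ a, 0 ≤ F a) : 0 ≤ ravg F :=
  div_nonneg (Finset.sum_nonneg fun a _ => h a) (by positivity)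

lemma ravg_sq (F : α → ℝ) : (ravg F) ^ 2 = ravg fun q : α × α => F q.1 * F q.2 := by
  unfold ravg
  rw [Fintype.sum_prod_type, Fintype.card_prod, div_pow]
  push_cast
  rw [sq, sq, Finset.sum_mul_sum]

lemma ravg_cs [Nonempty α] (F B : α → ℝ) (hB : ∀ a, |B a| ≤ 1) :
    (ravg fun a => F a * B a) ^ 2 ≤ ravg fun a => F a ^ 2 := by
  have hcs := Finset.sum_mul_sq_le_sq_mul_sq Finset.univ F B
  have hBsum : ∑ a, B a ^ 2 ≤ (Fintype.card α : ℝ) := by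
    calc ∑ a, B a ^ 2 ≤ ∑ _a : α, (1:ℝ) := Finset.sum_le_sum fun a _ => by
          have := hB a
          calc B a ^ 2 = |B a| ^ 2 := (sq_abs _).symm
          _ ≤ 1 := by nlinarith [abs_nonneg (B a)]
      _ = (Fintype.card α : ℝ) := by simp
  have hc : (0:ℝ) < (Fintype.card α : ℝ) := by
    have := Fintype.card_pos (α := α); positivity
  have hF2 : (0:ℝ) ≤ ∑ a, F a ^ 2 := Finset.sum_nonneg fun a _ => sq_nonneg _
  unfold ravg
  rw [div_pow]
  rw [div_le_div_iff₀ (by positivity) hc]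
  have h1 : (∑ a, F a ^ 2) * (∑ a, B a ^ 2) ≤ (∑ a, F a ^ 2) * (Fintype.card α : ℝ) :=
    mul_le_mul_of_nonneg_left hBsum hF2
  calc (∑ a, F a * B a) ^ 2 * (Fintype.card α : ℝ)
      ≤ ((∑ a, F a ^ 2) * ∑ a, B a ^ 2) * (Fintype.card α : ℝ) :=
        mul_le_mul_of_nonneg_right hcs hc.le
    _ ≤ ((∑ a, F a ^ 2) * (Fintype.card α : ℝ)) * (Fintype.card α : ℝ) :=
        mul_le_mul_of_nonneg_right h1 hc.le
    _ = (∑ a, F a ^ 2) * (Fintype.card α : ℝ) ^ 2 := by ring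


lemma ravg_unique [Unique α] (F : α → ℝ) : ravg F = F default := by
  simp [ravg]

lemma prod_pi_fin_succ {ι M : Type*} [Fintype ι] [CommMonoid M] {s : ℕ}
    (F : (Fin (s + 1) → ι) → M) :
    ∏ y : Fin (s + 1) → ι, F y = ∏ a : ι, ∏ yt : Fin s → ι, F (Fin.cons a yt) := by
  rw [← Equiv.prod_comp (Fin.consEquiv fun _ => ι) F, Fintype.prod_prod_type]
  rfl

/-- reassociating equiv -/
def e1 (X G : Type*) (s : ℕ) : ((X × (Fin s → G)) × G) ≃ (X × (Fin (s + 1) → G)) where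
  toFun w := (w.1.1, Fin.cons w.2 w.1.2)
  invFun q := ((q.1, Fin.tail q.2), q.2 0)
  left_inv w := by simp
  right_inv q := by simp

def e4 (X G : Type*) (s : ℕ) :
    ((X × (Fin s → G)) × (G × G)) ≃ ((X × (G × G)) × (Fin s → G)) where
  toFun w := ((w.1.1, w.2), w.1.2)
  invFun w := ((w.1.1, w.2), w.1.2)
  left_inv w := rfl
  right_inv w := rfl

def e5 (X G : Type*) (s : ℕ) :
    ((X × (G × G)) × ((Fin s → G) × (Fin s → G)))
      ≃ (X × ((Fin (s + 1) → G) × (Fin (s + 1) → G))) where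
  toFun w := (w.1.1, (Fin.cons w.1.2.1 w.2.1, Fin.cons w.1.2.2 w.2.2))
  invFun q := ((q.1, (q.2.1 0, q.2.2 0)), (Fin.tail q.2.1, Fin.tail q.2.2))
  left_inv w := by simp
  right_inv q := by simp

set_option maxHeartbeats 1600000 in
lemma lemA (G : Type u) [Fintype G] [Nonempty G] :
    ∀ (s : ℕ) (X : Type u) [Fintype X] [Nonempty X]
      (g : X → (Fin s → G) → ℝ) (B : Fin s → X → (Fin s → G) → ℝ),
      (∀ t x y, |B t x y| ≤ 1) →
      (∀ t x (y y' : Fin s → G), (∀ u, u ≠ t → y u = y' u) → B t x y = B t x y') →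
      |ravg fun q : X × (Fin s → G) => g q.1 q.2 * ∏ t, B t q.1 q.2| ^ (2 ^ s)
        ≤ |ravg fun q : X × ((Fin s → G) × (Fin s → G)) =>
            ∏ ω : Fin s → Bool, g q.1 (fun t => if ω t then q.2.2 t else q.2.1 t)| := by
  intro s
  induction s with
  | zero =>
    intro X _ _ g B _ _
    have h1 : (ravg fun q : X × (Fin 0 → G) => g q.1 q.2 * ∏ t, B t q.1 q.2)
        = ravg fun x : X => g x default := by
      rw [ravg_prod]
      exact ravg_congr fun x => by
        rw [ravg_unique]
        simp
    have h2 : (ravg fun q : X × ((Fin 0 → G) × (Fin 0 → G)) =>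
          ∏ ω : Fin 0 → Bool, g q.1 (fun t => if ω t then q.2.2 t else q.2.1 t))
        = ravg fun x : X => g x default := by
      rw [ravg_prod]
      refine ravg_congr fun x => ?_
      have : ∀ w : (Fin 0 → G) × (Fin 0 → G),
          (∏ ω : Fin 0 → Bool, g x (fun t => if ω t then w.2 t else w.1 t)) = g x default := by
        intro w
        rw [Fintype.prod_unique]
        congr 1
        exact Subsingleton.elim _ _
      rw [ravg_congr this, ravg_const]
    rw [pow_zero, pow_one, h1, h2]
  | succ s ih =>
    intro X _ _ g B hBle hBind
    set a0 : G := Classical.arbitrary G with ha0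
    set K : (X × (Fin s → G)) → G → ℝ :=
      fun z a => g z.1 (Fin.cons a z.2) * ∏ t : Fin s, B t.succ z.1 (Fin.cons a z.2) with hK
    set B0 : (X × (Fin s → G)) → ℝ := fun z => B 0 z.1 (Fin.cons a0 z.2) with hB0
    -- step A: rewrite the LHS average
    have hcons0 : ∀ (x : X) (a : G) (yt : (Fin s → G)),
        B 0 x (Fin.cons a yt) = B 0 x (Fin.cons a0 yt) := by
      intro x a yt
      refine hBind 0 x _ _ fun u hu => ?_
      obtain ⟨v, rfl⟩ := Fin.eq_succ_of_ne_zero hu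
      simp
    have hA : (ravg fun q : X × (Fin (s+1) → G) => g q.1 q.2 * ∏ t, B t q.1 q.2)
        = ravg fun z : X × (Fin s → G) => (ravg fun a : G => K z a) * B0 z := by
      calc (ravg fun q : X × (Fin (s+1) → G) => g q.1 q.2 * ∏ t, B t q.1 q.2)
          = ravg fun w : (X × (Fin s → G)) × G => g w.1.1 (Fin.cons w.2 w.1.2)
              * ∏ t : Fin (s+1), B t w.1.1 (Fin.cons w.2 w.1.2) :=
            (ravg_equiv (e1 X G s)
              (fun q : X × (Fin (s+1) → G) => g q.1 q.2 * ∏ t, B t q.1 q.2)).symm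
        _ = ravg fun z : X × (Fin s → G) => ravg fun a : G => g z.1 (Fin.cons a z.2)
              * ∏ t : Fin (s+1), B t z.1 (Fin.cons a z.2) := ravg_prod _
        _ = ravg fun z : X × (Fin s → G) => (ravg fun a : G => K z a) * B0 z := by
            refine ravg_congr fun z => ?_
            rw [← ravg_mul_const]
            refine ravg_congr fun a => ?_
            rw [Fin.prod_univ_succ, hcons0 z.1 a z.2]
            simp only [hK, hB0]
            ring
    -- step CS
    have hcs : (ravg fun z : X × (Fin s → G) => (ravg fun a : G => K z a) * B0 z) ^ 2
        ≤ ravg fun z : X × (Fin s → G) => (ravg fun a : G => K z a) ^ 2 :=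
      ravg_cs _ _ fun z => hBle 0 z.1 _
    -- expand square and regroup
    set g' : (X × (G × G)) → (Fin s → G) → ℝ :=
      fun x' yt => g x'.1 (Fin.cons x'.2.1 yt) * g x'.1 (Fin.cons x'.2.2 yt) with hg'
    set B' : Fin s → (X × (G × G)) → (Fin s → G) → ℝ :=
      fun t x' yt => B t.succ x'.1 (Fin.cons x'.2.1 yt) * B t.succ x'.1 (Fin.cons x'.2.2 yt)
      with hB'
    have hM : (ravg fun z : X × (Fin s → G) => (ravg fun a : G => K z a) ^ 2)
        = ravg fun w : (X × (G × G)) × (Fin s → G) => g' w.1 w.2 * ∏ t, B' t w.1 w.2 := by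
      calc (ravg fun z : X × (Fin s → G) => (ravg fun a : G => K z a) ^ 2)
          = ravg fun z : X × (Fin s → G) => ravg fun q : G × G => K z q.1 * K z q.2 :=
            ravg_congr fun z => ravg_sq _
        _ = ravg fun w : (X × (Fin s → G)) × (G × G) => K w.1 w.2.1 * K w.1 w.2.2 :=
            (ravg_prod (fun w : (X × (Fin s → G)) × (G × G) => K w.1 w.2.1 * K w.1 w.2.2)).symm
        _ = ravg fun w : (X × (Fin s → G)) × (G × G) =>
              g' ((e4 X G s) w).1 ((e4 X G s) w).2
                * ∏ t, B' t ((e4 X G s) w).1 ((e4 X G s) w).2 := by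
            refine ravg_congr fun w => ?_
            show K w.1 w.2.1 * K w.1 w.2.2
              = g' (w.1.1, w.2) w.1.2 * ∏ t, B' t (w.1.1, w.2) w.1.2
            simp only [hK, hg', hB', Finset.prod_mul_distrib]
            ring
        _ = ravg fun w : (X × (G × G)) × (Fin s → G) => g' w.1 w.2 * ∏ t, B' t w.1 w.2 :=
            ravg_equiv (e4 X G s)
              (fun w : (X × (G × G)) × (Fin s → G) => g' w.1 w.2 * ∏ t, B' t w.1 w.2)
    have hMnn : 0 ≤ ravg fun z : X × (Fin s → G) => (ravg fun a : G => K z a) ^ 2 :=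
      ravg_nonneg fun z => sq_nonneg _
    -- apply induction hypothesis
    have hB'le : ∀ t x' yt, |B' t x' yt| ≤ 1 := by
      intro t x' yt
      rw [hB', abs_mul]
      exact mul_le_one₀ (hBle _ _ _) (abs_nonneg _) (hBle _ _ _)
    have hB'ind : ∀ t x' (y y' : (Fin s → G)), (∀ u, u ≠ t → y u = y' u) → B' t x' y = B' t x' y' := by
      intro t x' y y' h
      have key : ∀ a : G, ∀ u : Fin (s+1), u ≠ t.succ →
          (Fin.cons a y : Fin (s+1) → G) u = (Fin.cons a y' : Fin (s+1) → G) u := by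
        intro a u hu
        rcases Fin.eq_zero_or_eq_succ u with rfl | ⟨v, rfl⟩
        · simp
        · simp only [Fin.cons_succ]
          exact h v (fun hv => hu (by rw [hv]))
      simp only [hB']
      rw [hBind t.succ x'.1 _ _ (key x'.2.1), hBind t.succ x'.1 _ _ (key x'.2.2)]
    have hih := ih (X × (G × G)) g' B' hB'le hB'ind
    -- final right-hand side
    have hR : (ravg fun q : (X × (G × G)) × ((Fin s → G) × (Fin s → G)) =>
          ∏ ω : Fin s → Bool, g' q.1 (fun t => if ω t then q.2.2 t else q.2.1 t))
        = ravg fun q : X × ((Fin (s+1) → G) × (Fin (s+1) → G)) =>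
            ∏ ω : Fin (s+1) → Bool, g q.1 (fun t => if ω t then q.2.2 t else q.2.1 t) := by
      calc (ravg fun q : (X × (G × G)) × ((Fin s → G) × (Fin s → G)) =>
            ∏ ω : Fin s → Bool, g' q.1 (fun t => if ω t then q.2.2 t else q.2.1 t))
          = ravg fun w : (X × (G × G)) × ((Fin s → G) × (Fin s → G)) =>
              ∏ ω : Fin (s+1) → Bool, g ((e5 X G s) w).1
                (fun t => if ω t then ((e5 X G s) w).2.2 t else ((e5 X G s) w).2.1 t) := ?_
        _ = ravg fun q : X × ((Fin (s+1) → G) × (Fin (s+1) → G)) =>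
              ∏ ω : Fin (s+1) → Bool, g q.1 (fun t => if ω t then q.2.2 t else q.2.1 t) :=
            ravg_equiv (e5 X G s)
              (fun q : X × ((Fin (s+1) → G) × (Fin (s+1) → G)) =>
                ∏ ω : Fin (s+1) → Bool, g q.1 (fun t => if ω t then q.2.2 t else q.2.1 t))
      refine ravg_congr fun w => ?_
      show (∏ ω : Fin s → Bool, g' w.1 (fun t => if ω t then w.2.2 t else w.2.1 t))
        = ∏ ω : Fin (s+1) → Bool, g w.1.1
            (fun t => if ω t then (Fin.cons w.1.2.2 w.2.2 : Fin (s+1) → G) t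
              else (Fin.cons w.1.2.1 w.2.1 : Fin (s+1) → G) t)
      rw [prod_pi_fin_succ]
      rw [Fintype.prod_bool]
      have harg : ∀ (bb : Bool) (ω : Fin s → Bool),
          (fun t => if (Fin.cons bb ω : Fin (s+1) → Bool) t
              then (Fin.cons w.1.2.2 w.2.2 : Fin (s+1) → G) t
              else (Fin.cons w.1.2.1 w.2.1 : Fin (s+1) → G) t)
          = (Fin.cons (if bb then w.1.2.2 else w.1.2.1)
              (fun v => if ω v then w.2.2 v else w.2.1 v) : Fin (s+1) → G) := by
        intro bb ω
        funext t
        refine Fin.cases ?_ (fun v => ?_) t <;> simp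
      simp only [harg]
      rw [← Finset.prod_mul_distrib]
      refine Finset.prod_congr rfl fun ω _ => ?_
      simp only [hg', Bool.false_eq_true, if_false, eq_self_iff_true, if_true]
      ring
    -- chain everything
    have e2 : (2:ℕ) ^ (s+1) = 2 ^ s * 2 := by rw [pow_succ]
    calc |ravg fun q : X × (Fin (s+1) → G) => g q.1 q.2 * ∏ t, B t q.1 q.2| ^ 2 ^ (s+1)
        = ((ravg fun z : X × (Fin s → G) => (ravg fun a : G => K z a) * B0 z) ^ 2) ^ 2 ^ s := by
          rw [hA, show (2:ℕ) ^ (s+1) = 2 * 2 ^ s from by rw [pow_succ']]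
          rw [pow_mul, sq_abs]
      _ ≤ (ravg fun z : X × (Fin s → G) => (ravg fun a : G => K z a) ^ 2) ^ 2 ^ s := by
          exact pow_le_pow_left₀ (sq_nonneg _) hcs _
      _ = |ravg fun w : (X × (G × G)) × (Fin s → G) => g' w.1 w.2 * ∏ t, B' t w.1 w.2| ^ 2 ^ s := by
          rw [← hM, abs_of_nonneg hMnn]
      _ ≤ |ravg fun q : (X × (G × G)) × ((Fin s → G) × (Fin s → G)) =>
            ∏ ω : Fin s → Bool, g' q.1 (fun t => if ω t then q.2.2 t else q.2.1 t)| := hih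
      _ = _ := by rw [hR]


/-- real Gowers box average -/
def rga {G : Type*} [Fintype G] [AddCommGroup G] : ℕ → (G → ℝ) → ℝ
  | 0, F => ravg F
  | s + 1, F => ravg fun h : G => rga s fun x => F (x + h) * F x

variable {G : Type*} [AddCommGroup G] [Fintype G]

lemma gowersAvg_ofReal (s : ℕ) (F : G → ℝ) :
    gowersAvg s (fun x => (F x : ℂ)) = ((rga s F : ℝ) : ℂ) := by
  induction s generalizing F with
  | zero =>
    show cavg (fun x => (F x : ℂ)) = _
    simp only [rga, cavg, ravg]
    push_cast
    rfl
  | succ s ih =>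
    show cavg (fun h => gowersAvg s (mDeriv h fun x => (F x : ℂ))) = _
    have hm : ∀ h : G, (mDeriv h fun x => (F x : ℂ)) = fun x => ((F (x + h) * F x : ℝ) : ℂ) := by
      intro h; funext x
      simp [mDeriv, Complex.conj_ofReal]
    have : ∀ h : G, gowersAvg s (mDeriv h fun x => (F x : ℂ))
        = ((rga s fun x => F (x + h) * F x : ℝ) : ℂ) := by
      intro h; rw [hm h]; exact ih _
    rw [show (cavg fun h => gowersAvg s (mDeriv h fun x => (F x : ℂ)))
        = cavg fun h : G => ((rga s fun x => F (x + h) * F x : ℝ) : ℂ) from by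
      exact congrArg cavg (funext this)]
    show _ = ((ravg fun h : G => rga s fun x => F (x + h) * F x : ℝ) : ℂ)
    simp only [cavg, ravg]
    push_cast
    rfl

lemma rga_translate (s : ℕ) (a : G) (F : G → ℝ) :
    rga s (fun x => F (x + a)) = rga s F := by
  induction s generalizing F with
  | zero => exact ravg_equiv (Equiv.addRight a) F
  | succ s ih =>
    show (ravg fun h : G => rga s fun x => F (x + h + a) * F (x + a))
      = ravg fun h : G => rga s fun x => F (x + h) * F x
    refine ravg_congr fun h => ?_
    rw [show (fun x => F (x + h + a) * F (x + a))
        = fun x => (fun y => F (y + h) * F y) (x + a) from funext fun x => by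
      show F (x + h + a) * F (x + a) = F (x + a + h) * F (x + a)
      rw [add_right_comm]]
    exact ih (fun y => F (y + h) * F y)

def e7 (G : Type*) [AddCommGroup G] : (G × G) ≃ (G × G) where
  toFun q := (q.1, q.1 + q.2)
  invFun q := (q.1, q.2 - q.1)
  left_inv q := by simp
  right_inv q := by simp

def e6 (G : Type*) (s : ℕ) :
    ((G × G) × (G × ((Fin s → G) × (Fin s → G))))
      ≃ (G × ((Fin (s + 1) → G) × (Fin (s + 1) → G))) where
  toFun w := (w.2.1, (Fin.cons w.1.1 w.2.2.1, Fin.cons w.1.2 w.2.2.2))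
  invFun q := ((q.2.1 0, q.2.2 0), (q.1, (Fin.tail q.2.1, Fin.tail q.2.2)))
  left_inv w := by simp
  right_inv q := by simp

set_option maxHeartbeats 4000000 in
lemma box_eq_rga (s : ℕ) (F : G → ℝ) :
    (ravg fun q : G × ((Fin s → G) × (Fin s → G)) =>
        ∏ ω : Fin s → Bool, F (q.1 + ∑ t, if ω t then q.2.2 t else q.2.1 t)) = rga s F := by
  induction s generalizing F with
  | zero =>
    calc (ravg fun q : G × ((Fin 0 → G) × (Fin 0 → G)) =>
            ∏ ω : Fin 0 → Bool, F (q.1 + ∑ t, if ω t then q.2.2 t else q.2.1 t))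
        = ravg fun q : G × ((Fin 0 → G) × (Fin 0 → G)) => F q.1 := by
          refine ravg_congr fun q => ?_
          simp
      _ = ravg fun z : G => ravg fun _ : (Fin 0 → G) × (Fin 0 → G) => F z := ravg_prod _
      _ = ravg F := ravg_congr fun z => ravg_const _
      _ = rga 0 F := rfl
  | succ s ih =>
    calc (ravg fun q : G × ((Fin (s+1) → G) × (Fin (s+1) → G)) =>
            ∏ ω : Fin (s+1) → Bool, F (q.1 + ∑ t, if ω t then q.2.2 t else q.2.1 t))
        = ravg fun w : (G × G) × (G × ((Fin s → G) × (Fin s → G))) =>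
            ∏ ω : Fin (s+1) → Bool, F (((e6 G s) w).1
              + ∑ t, if ω t then ((e6 G s) w).2.2 t else ((e6 G s) w).2.1 t) :=
          (ravg_equiv (e6 G s) (fun q : G × ((Fin (s+1) → G) × (Fin (s+1) → G)) =>
            ∏ ω : Fin (s+1) → Bool, F (q.1 + ∑ t, if ω t then q.2.2 t else q.2.1 t))).symm
      _ = ravg fun w : (G × G) × (G × ((Fin s → G) × (Fin s → G))) =>
            ∏ ω : Fin s → Bool,
              (fun u => F (u + w.1.1) * F (u + w.1.2))
                (w.2.1 + ∑ t, if ω t then w.2.2.2 t else w.2.2.1 t) := by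
          refine ravg_congr fun w => ?_
          show (∏ ω : Fin (s+1) → Bool, F (w.2.1
              + ∑ t, if ω t then (Fin.cons w.1.2 w.2.2.2 : Fin (s+1) → G) t
                else (Fin.cons w.1.1 w.2.2.1 : Fin (s+1) → G) t)) = _
          rw [prod_pi_fin_succ, Fintype.prod_bool]
          have harg : ∀ (bb : Bool) (ω : Fin s → Bool),
              (∑ t : Fin (s+1), if (Fin.cons bb ω : Fin (s+1) → Bool) t
                  then (Fin.cons w.1.2 w.2.2.2 : Fin (s+1) → G) t
                  else (Fin.cons w.1.1 w.2.2.1 : Fin (s+1) → G) t)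
              = (if bb then w.1.2 else w.1.1)
                  + ∑ v : Fin s, if ω v then w.2.2.2 v else w.2.2.1 v := by
            intro bb ω
            rw [Fin.sum_univ_succ]
            simp
          simp only [harg]
          rw [← Finset.prod_mul_distrib]
          refine Finset.prod_congr rfl fun ω _ => ?_
          simp only [Bool.false_eq_true, if_false, eq_self_iff_true, if_true]
          rw [mul_comm]
          congr 1 <;> · congr 1; abel
      _ = ravg fun ab : G × G => ravg fun q : G × ((Fin s → G) × (Fin s → G)) =>
            ∏ ω : Fin s → Bool,
              (fun u => F (u + ab.1) * F (u + ab.2))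
                (q.1 + ∑ t, if ω t then q.2.2 t else q.2.1 t) := ravg_prod _
      _ = ravg fun ab : G × G => rga s fun u => F (u + ab.1) * F (u + ab.2) :=
          ravg_congr fun ab => ih (fun u => F (u + ab.1) * F (u + ab.2))
      _ = ravg fun ah : G × G => rga s fun u => F (u + ah.1) * F (u + (ah.1 + ah.2)) :=
          (ravg_equiv (e7 G) (fun ab : G × G => rga s fun u => F (u + ab.1) * F (u + ab.2))).symm
      _ = ravg fun ah : G × G => rga s fun x => F (x + ah.2) * F x := by
          refine ravg_congr fun ah => ?_
          rw [show (fun u => F (u + ah.1) * F (u + (ah.1 + ah.2)))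
              = fun u => (fun x => F (x + ah.2) * F x) (u + ah.1) from funext fun u => by
            show F (u + ah.1) * F (u + (ah.1 + ah.2)) = F (u + ah.1 + ah.2) * F (u + ah.1)
            rw [mul_comm]
            congr 2
            abel]
          exact rga_translate s ah.1 (fun x => F (x + ah.2) * F x)
      _ = ravg fun a : G => ravg fun h : G => rga s fun x => F (x + h) * F x := ravg_prod _
      _ = ravg fun _a : G => rga (s+1) F := ravg_congr fun _a => rfl
      _ = rga (s+1) F := ravg_const _

lemma ravg_comp_surj {X : Type*} [Fintype X] [AddCommGroup X]
    (φ : X →+ G) (hs : Function.Surjective φ) (F : G → ℝ) :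
    ravg (fun x => F (φ x)) = ravg F := by
  classical
  have hcard : ∀ z : G, (Finset.univ.filter fun x : X => φ x = z).card
      = (Finset.univ.filter fun x : X => φ x = 0).card := by
    intro z
    obtain ⟨x0, hx0⟩ := hs z
    refine Finset.card_bij (fun x _ => x - x0) ?_ ?_ ?_
    · intro a ha
      simp only [Finset.mem_filter, Finset.mem_univ, true_and] at ha ⊢
      rw [map_sub, ha, hx0, sub_self]
    · intro a _ b _ h
      exact sub_left_inj.mp h
    · intro b hb
      simp only [Finset.mem_filter, Finset.mem_univ, true_and] at hb
      exact ⟨b + x0, by simp [Finset.mem_filter, map_add, hb, hx0], by simp⟩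
  set K : ℕ := (Finset.univ.filter fun x : X => φ x = 0).card with hKdef
  have hfib : ∑ x : X, F (φ x) = ∑ z : G, (K : ℝ) * F z := by
    rw [← Finset.sum_fiberwise_of_maps_to (fun x _ => Finset.mem_univ (φ x)) (fun x => F (φ x))]
    refine Finset.sum_congr rfl fun z _ => ?_
    have : ∀ x ∈ Finset.univ.filter fun x : X => φ x = z, F (φ x) = F z := by
      intro x hx
      simp only [Finset.mem_filter] at hx
      rw [hx.2]
    rw [Finset.sum_congr rfl this, Finset.sum_const, hcard z, nsmul_eq_mul]
  have hcardX : (Fintype.card X : ℝ) = (Fintype.card G : ℝ) * K := by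
    have := Finset.card_eq_sum_card_fiberwise (fun x (_ : x ∈ Finset.univ) => Finset.mem_univ (φ x))
    rw [← Finset.card_univ, this]
    push_cast
    rw [Finset.sum_congr rfl fun z _ => by rw [hcard z]]
    simp [Finset.sum_const, mul_comm]
  have hK0 : (K : ℝ) ≠ 0 := by
    have : (0 : G) ∈ Finset.univ.image φ := by
      obtain ⟨x, hx⟩ := hs 0
      exact Finset.mem_image.mpr ⟨x, Finset.mem_univ x, hx⟩
    obtain ⟨x, _, hx⟩ := Finset.mem_image.mp this
    have : x ∈ Finset.univ.filter fun x : X => φ x = 0 := by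
      simp [Finset.mem_filter, hx]
    have hpos : 0 < K := Finset.card_pos.mpr ⟨x, this⟩
    positivity
  have hG0 : (Fintype.card G : ℝ) ≠ 0 := by
    have := Fintype.card_pos (α := G); positivity
  unfold ravg
  rw [hfib, ← Finset.mul_sum, hcardX]
  field_simp


/-- dual vector lemma -/
lemma exists_dual_vec {p : ℕ} [Fact p.Prime] {l : ℕ} (S : Set (Fin l → ZMod p))
    (w : Fin l → ZMod p) (hw : w ∉ Submodule.span (ZMod p) S) :
    ∃ v : Fin l → ZMod p, (∑ r, w r * v r) = 1 ∧ ∀ u ∈ S, (∑ r, u r * v r) = 0 := by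
  obtain ⟨φ, hφ1, hφ2⟩ := Submodule.exists_dual_map_eq_bot_of_notMem hw inferInstance
  have key : ∀ u : Fin l → ZMod p, (∑ r, u r * φ (Pi.single r 1)) = φ u := by
    intro u
    conv_rhs => rw [pi_eq_sum_univ u]
    rw [map_sum]
    refine Finset.sum_congr rfl fun r _ => ?_
    rw [map_smul, smul_eq_mul]
    congr 2
    funext j
    simp [Pi.single_apply, eq_comm]
  refine ⟨fun r => (φ w)⁻¹ * φ (Pi.single r 1), ?_, ?_⟩
  · have : (∑ r, w r * ((φ w)⁻¹ * φ (Pi.single r 1)))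
        = (φ w)⁻¹ * ∑ r, w r * φ (Pi.single r 1) := by
      rw [Finset.mul_sum]
      exact Finset.sum_congr rfl fun r _ => by ring
    rw [this, key, inv_mul_cancel₀ hφ1]
  · intro u hu
    have hu0 : φ u = 0 := by
      have : φ u ∈ Submodule.map φ (Submodule.span (ZMod p) S) :=
        Submodule.mem_map_of_mem (Submodule.subset_span hu)
      rw [hφ2] at this
      simpa using this
    have : (∑ r, u r * ((φ w)⁻¹ * φ (Pi.single r 1)))
        = (φ w)⁻¹ * ∑ r, u r * φ (Pi.single r 1) := by
      rw [Finset.mul_sum]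
      exact Finset.sum_congr rfl fun r _ => by ring
    rw [this, key, hu0, mul_zero]

lemma formApply_shift {p ℓ n d' : ℕ} (L : Fin ℓ → ZMod p) (v : Fin d' → Fin ℓ → ZMod p)
    (x : Fin ℓ → Fin n → ZMod p) (y : Fin d' → Fin n → ZMod p) :
    formApply L (x + fun r => ∑ t, v t r • y t)
      = formApply L x + ∑ t, (∑ r, L r * v t r) • y t := by
  unfold formApply
  calc (∑ r, L r • (x + fun r' => ∑ t, v t r' • y t) r)
      = ∑ r, (L r • x r + ∑ t, (L r * v t r) • y t) := by
        refine Finset.sum_congr rfl fun r _ => ?_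
        rw [Pi.add_apply, smul_add, Finset.smul_sum]
        congr 1
        exact Finset.sum_congr rfl fun t _ => (smul_smul _ _ _)
    _ = (∑ r, L r • x r) + ∑ r, ∑ t, (L r * v t r) • y t := Finset.sum_add_distrib
    _ = (∑ r, L r • x r) + ∑ t, ∑ r, (L r * v t r) • y t := by rw [Finset.sum_comm]
    _ = (∑ r, L r • x r) + ∑ t, (∑ r, L r * v t r) • y t := by
        congr 1
        exact Finset.sum_congr rfl fun t _ => (Finset.sum_smul).symm

def formHom {p ℓ n : ℕ} (L : Fin ℓ → ZMod p) :
    (Fin ℓ → Fin n → ZMod p) →+ (Fin n → ZMod p) :=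
  AddMonoidHom.mk' (formApply L) (by
    intro a b
    unfold formApply
    rw [← Finset.sum_add_distrib]
    exact Finset.sum_congr rfl fun t _ => by rw [Pi.add_apply, smul_add])

lemma formHom_surj {p ℓ n : ℕ} [Fact p.Prime] (L : Fin ℓ → ZMod p) (r : Fin ℓ)
    (hr : L r ≠ 0) : Function.Surjective (formHom (n := n) L) := by
  intro z
  classical
  refine ⟨fun r' => if r' = r then (L r)⁻¹ • z else 0, ?_⟩
  show formApply L _ = z
  unfold formApply
  rw [Finset.sum_eq_single r]
  · simp only [eq_self_iff_true, if_true, smul_smul, mul_inv_cancel₀ hr, one_smul]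
  · intro b _ hb
    simp [hb]
  · intro h
    exact absurd (Finset.mem_univ r) h


end CLAux

set_option maxHeartbeats 2000000 in
/-- Counting lemma: for `f_1,…,f_m : F_p^n → [-1,1]` and a system of linear
forms of Cauchy–Schwarz complexity `d`,
`|E_{x_1,…,x_ℓ}[∏ f_i(L_i(x))]| ≤ min_i ‖f_i‖_{U^{d+1}}`. -/
theorem counting_lemma (p : ℕ) [Fact p.Prime] (n m ℓ d : ℕ)
    (f : Fin m → (Fin n → ZMod p) → ℝ)
    (hf : ∀ i x, f i x ∈ Set.Icc (-1 : ℝ) 1)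
    (L : Fin m → Fin ℓ → ZMod p)
    (hL : CSComplexityLE p d L) (i : Fin m) :
    |ravg (fun x : Fin ℓ → Fin n → ZMod p => ∏ j, f j (formApply (L j) x))|
      ≤ gowersNorm (d + 1) (fun y => ((f i y : ℝ) : ℂ)) := by
  classical
  obtain ⟨c, hc⟩ := hL i
  have hf1 : ∀ j z, |f j z| ≤ 1 := fun j z => abs_le.mpr ⟨(hf j z).1, (hf j z).2⟩
  have hdual : ∀ t : Fin (d+1), ∃ v : Fin ℓ → ZMod p,
      (∑ r, L i r * v r) = 1 ∧ ∀ j, j ≠ i → c j = t → (∑ r, L j r * v r) = 0 := by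
    intro t
    obtain ⟨v, hv1, hv2⟩ := CLAux.exists_dual_vec _ (L i) (hc t)
    exact ⟨v, hv1, fun j hj hcj => hv2 (L j) ⟨j, hj, hcj, rfl⟩⟩
  choose v hv1 hv2 using hdual
  set a : Fin m → Fin (d+1) → ZMod p := fun j t => ∑ r, L j r * v t r with ha
  set wv : (Fin (d+1) → Fin n → ZMod p) → (Fin ℓ → Fin n → ZMod p) :=
    fun y r => ∑ t, v t r • y t with hwv
  set g : (Fin ℓ → Fin n → ZMod p) → (Fin (d+1) → Fin n → ZMod p) → ℝ :=
    fun x y => f i (formApply (L i) x + ∑ t, y t) with hg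
  set B : Fin (d+1) → (Fin ℓ → Fin n → ZMod p) → (Fin (d+1) → Fin n → ZMod p) → ℝ :=
    fun t x y => ∏ j ∈ Finset.univ.filter (fun j => j ≠ i ∧ c j = t),
      f j (formApply (L j) x + ∑ u, a j u • y u) with hB
  have hBle : ∀ t x y, |B t x y| ≤ 1 := by
    intro t x y
    simp only [hB]
    rw [Finset.abs_prod]
    exact Finset.prod_le_one (fun j _ => abs_nonneg _) (fun j _ => hf1 j _)
  have hBind : ∀ t x (y y' : Fin (d+1) → Fin n → ZMod p),
      (∀ u, u ≠ t → y u = y' u) → B t x y = B t x y' := by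
    intro t x y y' h
    simp only [hB]
    refine Finset.prod_congr rfl fun j hj => ?_
    simp only [Finset.mem_filter, Finset.mem_univ, true_and] at hj
    have hsum : (∑ u, a j u • y u) = ∑ u, a j u • y' u := by
      refine Finset.sum_congr rfl fun u _ => ?_
      by_cases hu : u = t
      · subst hu
        have h0 : a j u = 0 := hv2 u j hj.1 hj.2
        rw [h0, zero_smul, zero_smul]
      · rw [h u hu]
    rw [hsum]
  have key1 : ∀ (x : Fin ℓ → Fin n → ZMod p) (y : Fin (d+1) → Fin n → ZMod p),
      (∏ j, f j (formApply (L j) (x + wv y))) = g x y * ∏ t, B t x y := by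
    intro x y
    have harg : ∀ j, formApply (L j) (x + wv y) = formApply (L j) x + ∑ t, a j t • y t :=
      fun j => CLAux.formApply_shift (L j) v x y
    calc (∏ j, f j (formApply (L j) (x + wv y)))
        = ∏ j, f j (formApply (L j) x + ∑ t, a j t • y t) :=
          Finset.prod_congr rfl fun j _ => by rw [harg j]
      _ = f i (formApply (L i) x + ∑ t, a i t • y t)
            * ∏ j ∈ Finset.univ.erase i, f j (formApply (L j) x + ∑ t, a j t • y t) :=
          (Finset.mul_prod_erase Finset.univ _ (Finset.mem_univ i)).symm
      _ = g x y * ∏ t, B t x y := by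
          congr 1
          · simp only [hg]
            have : (∑ t, a i t • y t) = ∑ t, y t :=
              Finset.sum_congr rfl fun t _ => by
                rw [show a i t = (1 : ZMod p) from hv1 t, one_smul]
            rw [this]
          · rw [← Finset.prod_fiberwise_of_maps_to
                (fun (j : Fin m) (_ : j ∈ Finset.univ.erase i) => Finset.mem_univ (c j))
                (fun j => f j (formApply (L j) x + ∑ t, a j t • y t))]
            refine Finset.prod_congr rfl fun t _ => ?_
            simp only [hB]
            refine Finset.prod_congr ?_ fun j _ => rfl
            ext j
            simp only [Finset.mem_filter, Finset.mem_erase, Finset.mem_univ, true_and,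
              and_comm]
  have key2 : (ravg fun q : (Fin ℓ → Fin n → ZMod p) × (Fin (d+1) → Fin n → ZMod p) =>
        g q.1 q.2 * ∏ t, B t q.1 q.2)
      = ravg fun x : Fin ℓ → Fin n → ZMod p => ∏ j, f j (formApply (L j) x) := by
    calc (ravg fun q : (Fin ℓ → Fin n → ZMod p) × (Fin (d+1) → Fin n → ZMod p) =>
            g q.1 q.2 * ∏ t, B t q.1 q.2)
        = ravg fun q : (Fin ℓ → Fin n → ZMod p) × (Fin (d+1) → Fin n → ZMod p) =>
            ∏ j, f j (formApply (L j) (q.1 + wv q.2)) :=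
          CLAux.ravg_congr fun q => (key1 q.1 q.2).symm
      _ = ravg fun w : (Fin (d+1) → Fin n → ZMod p) × (Fin ℓ → Fin n → ZMod p) =>
            ∏ j, f j (formApply (L j) (w.2 + wv w.1)) :=
          CLAux.ravg_equiv (Equiv.prodComm _ _)
            (fun w : (Fin (d+1) → Fin n → ZMod p) × (Fin ℓ → Fin n → ZMod p) =>
              ∏ j, f j (formApply (L j) (w.2 + wv w.1)))
      _ = ravg fun y : Fin (d+1) → Fin n → ZMod p =>
            ravg fun x : Fin ℓ → Fin n → ZMod p => ∏ j, f j (formApply (L j) (x + wv y)) :=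
          CLAux.ravg_prod _
      _ = ravg fun _y : Fin (d+1) → Fin n → ZMod p =>
            ravg fun x : Fin ℓ → Fin n → ZMod p => ∏ j, f j (formApply (L j) x) :=
          CLAux.ravg_congr fun y =>
            CLAux.ravg_equiv (Equiv.addRight (wv y))
              (fun x => ∏ j, f j (formApply (L j) x))
      _ = ravg fun x : Fin ℓ → Fin n → ZMod p => ∏ j, f j (formApply (L j) x) :=
          CLAux.ravg_const _
  have hLi : L i ≠ 0 := by
    intro h0
    exact hc 0 (by rw [h0]; exact Submodule.zero_mem _)
  obtain ⟨r0, hr0⟩ : ∃ r, L i r ≠ 0 := by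
    by_contra hcon
    push_neg at hcon
    exact hLi (funext hcon)
  have hsurj := CLAux.formHom_surj (n := n) (L i) r0 hr0
  have key3 : (ravg fun q : (Fin ℓ → Fin n → ZMod p) ×
        ((Fin (d+1) → Fin n → ZMod p) × (Fin (d+1) → Fin n → ZMod p)) =>
        ∏ ω : Fin (d+1) → Bool, g q.1 (fun t => if ω t then q.2.2 t else q.2.1 t))
      = CLAux.rga (d+1) (f i) := by
    calc (ravg fun q : (Fin ℓ → Fin n → ZMod p) ×
            ((Fin (d+1) → Fin n → ZMod p) × (Fin (d+1) → Fin n → ZMod p)) =>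
            ∏ ω : Fin (d+1) → Bool, g q.1 (fun t => if ω t then q.2.2 t else q.2.1 t))
        = ravg fun w : ((Fin (d+1) → Fin n → ZMod p) × (Fin (d+1) → Fin n → ZMod p)) ×
              (Fin ℓ → Fin n → ZMod p) =>
            ∏ ω : Fin (d+1) → Bool,
              f i ((CLAux.formHom (n := n) (L i)) w.2
                + ∑ t, if ω t then w.1.2 t else w.1.1 t) :=
          CLAux.ravg_equiv (Equiv.prodComm _ _)
            (fun w : ((Fin (d+1) → Fin n → ZMod p) × (Fin (d+1) → Fin n → ZMod p)) ×
                (Fin ℓ → Fin n → ZMod p) =>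
              ∏ ω : Fin (d+1) → Bool,
                f i ((CLAux.formHom (n := n) (L i)) w.2
                  + ∑ t, if ω t then w.1.2 t else w.1.1 t))
      _ = ravg fun w : (Fin (d+1) → Fin n → ZMod p) × (Fin (d+1) → Fin n → ZMod p) =>
            ravg fun x : Fin ℓ → Fin n → ZMod p =>
              ∏ ω : Fin (d+1) → Bool,
                f i ((CLAux.formHom (n := n) (L i)) x
                  + ∑ t, if ω t then w.2 t else w.1 t) := CLAux.ravg_prod _
      _ = ravg fun w : (Fin (d+1) → Fin n → ZMod p) × (Fin (d+1) → Fin n → ZMod p) =>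
            ravg fun z : Fin n → ZMod p =>
              ∏ ω : Fin (d+1) → Bool, f i (z + ∑ t, if ω t then w.2 t else w.1 t) :=
          CLAux.ravg_congr fun w =>
            CLAux.ravg_comp_surj (CLAux.formHom (L i)) hsurj
              (fun z => ∏ ω : Fin (d+1) → Bool, f i (z + ∑ t, if ω t then w.2 t else w.1 t))
      _ = ravg fun u : ((Fin (d+1) → Fin n → ZMod p) × (Fin (d+1) → Fin n → ZMod p)) ×
              (Fin n → ZMod p) =>
            ∏ ω : Fin (d+1) → Bool, f i (u.2 + ∑ t, if ω t then u.1.2 t else u.1.1 t) :=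
          (CLAux.ravg_prod
            (fun u : ((Fin (d+1) → Fin n → ZMod p) × (Fin (d+1) → Fin n → ZMod p)) ×
                (Fin n → ZMod p) =>
              ∏ ω : Fin (d+1) → Bool,
                f i (u.2 + ∑ t, if ω t then u.1.2 t else u.1.1 t))).symm
      _ = ravg fun q : (Fin n → ZMod p) ×
              ((Fin (d+1) → Fin n → ZMod p) × (Fin (d+1) → Fin n → ZMod p)) =>
            ∏ ω : Fin (d+1) → Bool, f i (q.1 + ∑ t, if ω t then q.2.2 t else q.2.1 t) :=
          CLAux.ravg_equiv (Equiv.prodComm _ _)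
            (fun q : (Fin n → ZMod p) ×
                ((Fin (d+1) → Fin n → ZMod p) × (Fin (d+1) → Fin n → ZMod p)) =>
              ∏ ω : Fin (d+1) → Bool, f i (q.1 + ∑ t, if ω t then q.2.2 t else q.2.1 t))
      _ = CLAux.rga (d+1) (f i) := CLAux.box_eq_rga (d+1) (f i)
  have main := CLAux.lemA (Fin n → ZMod p) (d+1) (Fin ℓ → Fin n → ZMod p) g B hBle hBind
  rw [key2, key3] at main
  have hga : ‖gowersAvg (d+1) (fun y => ((f i y : ℝ) : ℂ))‖
      = |CLAux.rga (d+1) (f i)| := by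
    rw [CLAux.gowersAvg_ofReal]
    rw [Complex.norm_real, Real.norm_eq_abs]
  have hpow : gowersNorm (d+1) (fun y => ((f i y : ℝ) : ℂ)) ^ (2 ^ (d+1) : ℕ)
      = |CLAux.rga (d+1) (f i)| := by
    rw [← hga]
    unfold gowersNorm
    rw [← Real.rpow_natCast
      (‖gowersAvg (d+1) fun y => ((f i y : ℝ) : ℂ)‖ ^ ((1:ℝ)/2^(d+1))) (2^(d+1)),
      ← Real.rpow_mul (norm_nonneg _)]
    rw [show ((1:ℝ)/2^(d+1)) * ((2^(d+1) : ℕ) : ℝ) = 1 from by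
      push_cast
      field_simp]
    exact Real.rpow_one _
  refine le_of_pow_le_pow_left₀ (n := 2^(d+1)) (by positivity) ?_ ?_
  · exact Real.rpow_nonneg (norm_nonneg _) _
  · rw [hpow]
    exact main

end
end

section
/- Any set L = {L_1,...,L_m} of pairwise linearly independent linear forms (no form a scalar multiple of another) has Cauchy–Schwarz complexity at most m − 2. -/
open scoped BigOperators

noncomputable section

/-- Any set of `m` pairwise linearly independent (nonzero, no one a scalar
multiple of another) linear forms has Cauchy–Schwarz complexity at most `m - 2`. -/
theorem complexity_le_of_pairwise_indep (p : ℕ) [Fact p.Prime] (k m : ℕ)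
    (L : Fin m → Fin k → ZMod p)
    (hne : ∀ i, L i ≠ 0)
    (hind : ∀ i j, i ≠ j → ∀ c : ZMod p, L i ≠ c • L j) :
    CSComplexityLE p (m - 2) L := by
  intro i
  refine ⟨fun j => ⟨min (if j.val < i.val then j.val else j.val - 1) (m - 2), by omega⟩,
    fun t hmem => ?_⟩
  set c : Fin m → Fin (m - 2 + 1) := fun j =>
    ⟨min (if j.val < i.val then j.val else j.val - 1) (m - 2), by omega⟩ with hc
  by_cases hS : ∃ j, j ≠ i ∧ c j = t
  · obtain ⟨j0, hj0ne, hj0t⟩ := hS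
    have hsub : {v | ∃ j, j ≠ i ∧ c j = t ∧ v = L j} ⊆ {L j0} := by
      rintro v ⟨j, hji, hjt, rfl⟩
      have hj : j = j0 := by
        have h1 : (c j).val = (c j0).val := by rw [hjt, hj0t]
        have hine : j.val ≠ i.val := fun h => hji (Fin.ext h)
        have hi0ne : j0.val ≠ i.val := fun h => hj0ne (Fin.ext h)
        have hjlt : j.val < m := j.isLt
        have hj0lt : j0.val < m := j0.isLt
        have hilt : i.val < m := i.isLt
        simp only [hc] at h1
        apply Fin.ext
        split_ifs at h1 <;> omega
      simp [hj]
    have hmem' := Submodule.span_mono hsub hmem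
    rw [Submodule.mem_span_singleton] at hmem'
    obtain ⟨a, ha⟩ := hmem'
    exact hind i j0 (fun h => hj0ne h.symm) a ha.symm
  · have hempty : {v | ∃ j, j ≠ i ∧ c j = t ∧ v = L j} = ∅ := by
      ext v
      simp only [Set.mem_setOf_eq, Set.mem_empty_iff_false, iff_false]
      rintro ⟨j, hji, hjt, rfl⟩
      exact hS ⟨j, hji, hjt⟩
    rw [hempty, Submodule.span_empty] at hmem
    exact hne i (by simpa using hmem)

end
end
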